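/- Let g : [0, h] → ℝ be three times continuously differentiable and let ĝ be the quadratic polynomial matching g(0), g(h), and ∫₀ʰ g. Then sup_{x ∈ [0,h]} |g(x) − ĝ(x)| ≤ C h³ sup_{x∈[0,h]} |g'''(x)| for an absolute constant C (one may take C = 1/12). -/

import Mathlib

open intervalIntegral

open Set in
lemma idw_eq {f : ℝ → ℝ} {n : ℕ∞} {m : ℕ} (hf : ContDiff ℝ n f) (hmn : (m : ℕ∞) ≤ n)
    {s : Set ℝ} (hs : UniqueDiffOn ℝ s) {x : ℝ} (hx : x ∈ s) :
    iteratedDerivWithin m f s x = iteratedDeriv m f x := by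
  have h := ((contDiff_iff_ftaylorSeries.mp hf).hasFTaylorSeriesUpToOn
    s).eq_iteratedFDerivWithin_of_uniqueDiffOn (by exact_mod_cast hmn) hs hx
  rw [iteratedDerivWithin_eq_iteratedFDerivWithin, iteratedDeriv_eq_iteratedFDeriv, ← h]
  rfl


open Set in
lemma taylor_bd {g : ℝ → ℝ} (hg : ContDiff ℝ 3 g) {a b M : ℝ}
    (hM : ∀ y ∈ Icc a b, |iteratedDeriv 3 g y| ≤ M) {x y : ℝ}
    (hx : x ∈ Icc a b) (hy : y ∈ Icc a b) :
    |g y - (g x + iteratedDeriv 1 g x * (y - x) + iteratedDeriv 2 g x * (y - x) ^ 2 / 2)|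
      ≤ M * |y - x| ^ 3 / 6 := by
  rcases lt_trichotomy x y with hxy | rfl | hxy
  · -- x < y
    have hud := uniqueDiffOn_Icc hxy
    have hf' : DifferentiableOn ℝ (iteratedDerivWithin 2 g (Icc x y)) (Ioo x y) :=
      ((hg.differentiable_iteratedDeriv 2 (by norm_num)).differentiableOn).congr
        (fun z hz => idw_eq hg (by norm_num) hud (Ioo_subset_Icc_self hz))
    have hTL := taylor_mean_remainder_lagrange (f := g) (n := 2) hxy.ne
      (by rw [uIcc_of_le hxy.le]; exact hg.contDiffOn.of_le (by norm_num))
      (by rw [uIcc_of_le hxy.le, uIoo_of_le hxy.le]; exact hf')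
    rw [uIcc_of_le hxy.le, uIoo_of_le hxy.le] at hTL
    obtain ⟨x', hx', hrem⟩ := hTL
    have hmem := left_mem_Icc.2 hxy.le
    have ht : taylorWithinEval g 2 (Icc x y) x y =
        g x + iteratedDeriv 1 g x * (y - x) + iteratedDeriv 2 g x * (y - x) ^ 2 / 2 := by
      rw [taylor_within_apply]
      simp only [Finset.sum_range_succ, Finset.sum_range_zero, smul_eq_mul, zero_add]
      rw [idw_eq hg (by norm_num) hud hmem (m := 0),
          idw_eq hg (by norm_num) hud hmem (m := 1),
          idw_eq hg (by norm_num) hud hmem (m := 2)]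
      simp [Nat.factorial, iteratedDeriv_zero]
      ring
    rw [ht] at hrem
    have hx'ab : x' ∈ Icc a b := ⟨hx.1.trans hx'.1.le, hx'.2.le.trans hy.2⟩
    rw [hrem, idw_eq hg (by norm_num) hud (Ioo_subset_Icc_self hx') (m := 3)]
    calc |iteratedDeriv 3 g x' * (y - x) ^ (2+1) / ((2+1).factorial : ℝ)|
        = |iteratedDeriv 3 g x'| * |y - x| ^ 3 / 6 := by
          rw [abs_div, abs_mul, abs_pow]; norm_num [Nat.factorial]
      _ ≤ M * |y - x| ^ 3 / 6 := by gcongr; exact hM x' hx'ab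
  · simp
  · -- y < x : reflection
    have hud := uniqueDiffOn_Icc hxy
    set G : ℝ → ℝ := fun t => g (x + y + -t) with hGdef
    have hG : ContDiff ℝ 3 G := hg.comp (contDiff_const.add contDiff_neg)
    have hGel : ∀ (n : ℕ) (t : ℝ), iteratedDeriv n G t
        = (-1 : ℝ) ^ n * iteratedDeriv n g (x + y + -t) := by
      intro n t
      have h1 : iteratedDeriv n G t
          = (-1 : ℝ) ^ n • iteratedDeriv n (fun u => g (x + y + u)) (-t) :=
        iteratedDeriv_comp_neg n (fun u => g (x + y + u)) t
      rw [h1, iteratedDeriv_comp_const_add]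
      simp [smul_eq_mul]
    have hf' : DifferentiableOn ℝ (iteratedDerivWithin 2 G (Icc y x)) (Ioo y x) :=
      ((hG.differentiable_iteratedDeriv 2 (by norm_num)).differentiableOn).congr
        (fun z hz => idw_eq hG (by norm_num) hud (Ioo_subset_Icc_self hz))
    have hTL := taylor_mean_remainder_lagrange (f := G) (n := 2) hxy.ne
      (by rw [uIcc_of_le hxy.le]; exact hG.contDiffOn.of_le (by norm_num))
      (by rw [uIcc_of_le hxy.le, uIoo_of_le hxy.le]; exact hf')
    rw [uIcc_of_le hxy.le, uIoo_of_le hxy.le] at hTL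
    obtain ⟨x', hx', hrem⟩ := hTL
    have hGx : G x = g y := by simp only [hGdef]; norm_num
    have hmem := left_mem_Icc.2 hxy.le
    have ht : taylorWithinEval G 2 (Icc y x) y x =
        g x + iteratedDeriv 1 g x * (y - x) + iteratedDeriv 2 g x * (y - x) ^ 2 / 2 := by
      rw [taylor_within_apply]
      simp only [Finset.sum_range_succ, Finset.sum_range_zero, smul_eq_mul, zero_add]
      rw [idw_eq hG (by norm_num) hud hmem (m := 0),
          idw_eq hG (by norm_num) hud hmem (m := 1),
          idw_eq hG (by norm_num) hud hmem (m := 2),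
          hGel 0 y, hGel 1 y, hGel 2 y]
      have hxy' : x + y + -y = x := by ring
      rw [hxy']
      simp [Nat.factorial, iteratedDeriv_zero]
      ring
    rw [hGx, ht] at hrem
    have hx'ab : x + y + -x' ∈ Icc a b :=
      ⟨by rcases hx' with ⟨h1, h2⟩; rcases hy with ⟨h3, h4⟩; linarith,
       by rcases hx' with ⟨h1, h2⟩; rcases hx with ⟨h3, h4⟩; linarith⟩
    rw [hrem, idw_eq hG (by norm_num) hud (Ioo_subset_Icc_self hx') (m := 3), hGel 3 x']
    calc |(-1 : ℝ) ^ 3 * iteratedDeriv 3 g (x + y + -x') * (x - y) ^ (2+1) / ((2+1).factorial : ℝ)|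
        = |iteratedDeriv 3 g (x + y + -x')| * |y - x| ^ 3 / 6 := by
          rw [abs_div, abs_mul, abs_mul]
          norm_num [abs_pow, abs_sub_comm x y, Nat.factorial]
      _ ≤ M * |y - x| ^ 3 / 6 := by gcongr; exact hM _ hx'ab


open Set in
lemma bnd {s t M r0 rh Ir : ℝ} (hs : 0 ≤ s) (ht : 0 ≤ t) (hM : 0 ≤ M)
    (h1 : |r0| ≤ M * s ^ 3 / 6) (h2 : |rh| ≤ M * t ^ 3 / 6)
    (h3 : |Ir| ≤ M * (s ^ 4 + t ^ 4) / 24) :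
    |r0 * t * (s + t) ^ 2 + rh * s * (s + t) ^ 2
      + 6 * (Ir - (s + t) * (r0 + rh) / 2) * (s * t)|
      ≤ 1 / 12 * (s + t) ^ 3 * M * (s + t) ^ 3 := by
  obtain ⟨h1l, h1u⟩ := abs_le.mp h1
  obtain ⟨h2l, h2u⟩ := abs_le.mp h2
  obtain ⟨h3l, h3u⟩ := abs_le.mp h3
  have c1 : (0:ℝ) ≤ t * (s + t) ^ 2 := by positivity
  have c2 : (0:ℝ) ≤ s * (s + t) ^ 2 := by positivity
  have c3 : (0:ℝ) ≤ 6 * (s * t) := by positivity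
  have c4 : (0:ℝ) ≤ 3 * (s + t) * (s * t) := by positivity
  have d1 : (0:ℝ) ≤ M * (s * t * ((s - t) ^ 2 - 3 * (s * t)) ^ 2) :=
    mul_nonneg hM (mul_nonneg (mul_nonneg hs ht) (sq_nonneg _))
  have d2 : (0:ℝ) ≤ M * (s * t) ^ 3 := mul_nonneg hM (pow_nonneg (mul_nonneg hs ht) 3)
  have d3 : (0:ℝ) ≤ M * ((s - t) ^ 3) ^ 2 := mul_nonneg hM (sq_nonneg _)
  rw [abs_le]
  constructor
  · nlinarith [mul_le_mul_of_nonneg_right h1l c1, mul_le_mul_of_nonneg_right h2l c2,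
      mul_le_mul_of_nonneg_right h3l c3, mul_le_mul_of_nonneg_right h1u c4,
      mul_le_mul_of_nonneg_right h2u c4, d1, d2, d3]
  · nlinarith [mul_le_mul_of_nonneg_right h1u c1, mul_le_mul_of_nonneg_right h2u c2,
      mul_le_mul_of_nonneg_right h3u c3, mul_le_mul_of_nonneg_right h1l c4,
      mul_le_mul_of_nonneg_right h2l c4, d1, d2, d3]


/-- The quadratic approximant `ĝ` of `g` on `[0, h]` matching the endpoint
values `g 0`, `g h` and the integral `∫₀ʰ g`. -/
noncomputable def ghat (g : ℝ → ℝ) (h : ℝ) (x : ℝ) : ℝ :=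
  g 0 * ((h - x) / h) + g h * (x / h) +
    (6 / h ^ 3 * ((∫ t in (0:ℝ)..h, g t) - h * (g 0 + g h) / 2)) * (x * (h - x))

open Set

/-- Uniform third-order accuracy: if `g` is `C³` and `|g'''| ≤ M` on `[0, h]`,
then `|g(x) − ĝ(x)| ≤ (1/12) h³ M` on `[0, h]`. -/
theorem stmt9 (g : ℝ → ℝ) (hg : ContDiff ℝ 3 g) (h : ℝ) (hh : 0 < h) (M : ℝ)
    (hM : ∀ y ∈ Set.Icc (0:ℝ) h, |iteratedDeriv 3 g y| ≤ M) :
    ∀ x ∈ Set.Icc (0:ℝ) h, |g x - ghat g h x| ≤ (1 / 12) * h ^ 3 * M := by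

  intro x hx
  obtain ⟨hx0, hxh⟩ := hx
  have hM0 : (0:ℝ) ≤ M := (abs_nonneg _).trans (hM x ⟨hx0, hxh⟩)
  set g1 := iteratedDeriv 1 g x with hg1
  set g2 := iteratedDeriv 2 g x with hg2
  set p : ℝ → ℝ := fun y => g x + g1 * (y - x) + g2 / 2 * (y - x) ^ 2 with hp
  set r : ℝ → ℝ := fun y => g y - p y with hrdef
  have hpc : Continuous p := by fun_prop
  have hrc : Continuous r := (hg.continuous).sub hpc
  have hr : ∀ y ∈ Icc (0:ℝ) h, |r y| ≤ M * |y - x| ^ 3 / 6 := by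
    intro y hy
    have := taylor_bd hg hM ⟨hx0, hxh⟩ hy
    have hre : r y = g y - (g x + g1 * (y - x) + g2 * (y - x) ^ 2 / 2) := by
      simp only [hrdef, hp]; ring
    rw [hre]
    exact this
  -- integral of p
  have e1 : (∫ t in (0:ℝ)..h, (t - x)) = ((h - x) ^ 2 - (0 - x) ^ 2) / 2 := by
    rw [intervalIntegral.integral_comp_sub_right (fun t => t) x, integral_id]
  have e2 : (∫ t in (0:ℝ)..h, (t - x) ^ 2) = ((h - x) ^ 3 - (0 - x) ^ 3) / 3 := by
    rw [intervalIntegral.integral_comp_sub_right (fun t => t ^ 2) x, integral_pow]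
    norm_num
  have i0 : IntervalIntegrable (fun _ : ℝ => g x) MeasureTheory.volume 0 h :=
    intervalIntegrable_const
  have i1 : IntervalIntegrable (fun t : ℝ => g1 * (t - x)) MeasureTheory.volume 0 h :=
    (by fun_prop : Continuous fun t : ℝ => g1 * (t - x)).intervalIntegrable 0 h
  have i2 : IntervalIntegrable (fun t : ℝ => g2 / 2 * (t - x) ^ 2) MeasureTheory.volume 0 h :=
    (by fun_prop : Continuous fun t : ℝ => g2 / 2 * (t - x) ^ 2).intervalIntegrable 0 h
  have hIp : (∫ t in (0:ℝ)..h, p t)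
      = g x * h + g1 * (((h - x) ^ 2 - (0 - x) ^ 2) / 2)
        + g2 / 2 * (((h - x) ^ 3 - (0 - x) ^ 3) / 3) := by
    simp only [hp]
    rw [intervalIntegral.integral_add (i0.add i1) i2, intervalIntegral.integral_add i0 i1,
      intervalIntegral.integral_const, intervalIntegral.integral_const_mul,
      intervalIntegral.integral_const_mul, e1, e2]
    simp
    ring
  have hgi : IntervalIntegrable g MeasureTheory.volume 0 h :=
    hg.continuous.intervalIntegrable 0 h
  have hpi : IntervalIntegrable p MeasureTheory.volume 0 h := hpc.intervalIntegrable 0 h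
  have hri : IntervalIntegrable r MeasureTheory.volume 0 h := hrc.intervalIntegrable 0 h
  have hsplit : (∫ t in (0:ℝ)..h, g t)
      = (∫ t in (0:ℝ)..h, p t) + ∫ t in (0:ℝ)..h, r t := by
    rw [← intervalIntegral.integral_add hpi hri]
    apply intervalIntegral.integral_congr
    intro t _
    simp [hrdef]
  set Ir := ∫ t in (0:ℝ)..h, r t with hIr
  -- key algebraic identity
  have e0 : g 0 = (g x + g1 * (0 - x) + g2 / 2 * (0 - x) ^ 2) + r 0 := by
    simp only [hrdef, hp]; ring
  have eh : g h = (g x + g1 * (h - x) + g2 / 2 * (h - x) ^ 2) + r h := by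
    simp only [hrdef, hp]; ring
  have key : (g x - ghat g h x) * h ^ 3
      = -(r 0 * (h - x) * h ^ 2 + r h * x * h ^ 2
          + 6 * (Ir - h * (r 0 + r h) / 2) * (x * (h - x))) := by
    rw [ghat, hsplit, hIp]
    rw [e0, eh]
    field_simp
    ring
  -- pointwise bounds
  have hr0 : |r 0| ≤ M * x ^ 3 / 6 := by
    have h0m := hr 0 (left_mem_Icc.2 hh.le)
    rwa [show |(0:ℝ) - x| = x by rw [abs_sub_comm, sub_zero, abs_of_nonneg hx0]] at h0m
  have hrh : |r h| ≤ M * (h - x) ^ 3 / 6 := by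
    have hhm := hr h (right_mem_Icc.2 hh.le)
    rwa [show |h - x| = h - x from abs_of_nonneg (by linarith)] at hhm
  -- integral bound
  have ia : IntervalIntegrable (fun t : ℝ => |t - x| ^ 3) MeasureTheory.volume 0 x :=
    (by fun_prop : Continuous fun t : ℝ => |t - x| ^ 3).intervalIntegrable 0 x
  have ib : IntervalIntegrable (fun t : ℝ => |t - x| ^ 3) MeasureTheory.volume x h :=
    (by fun_prop : Continuous fun t : ℝ => |t - x| ^ 3).intervalIntegrable x h
  have h4 : (∫ t in (0:ℝ)..x, |t - x| ^ 3) = x ^ 4 / 4 := by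
    have hcong : (∫ t in (0:ℝ)..x, |t - x| ^ 3) = ∫ t in (0:ℝ)..x, (x - t) ^ 3 := by
      apply intervalIntegral.integral_congr
      intro t ht
      rw [uIcc_of_le hx0] at ht
      show |t - x| ^ 3 = (x - t) ^ 3
      rw [abs_sub_comm, abs_of_nonneg (by linarith [ht.2])]
    rw [hcong, intervalIntegral.integral_comp_sub_left (fun u : ℝ => u ^ 3) x, integral_pow]
    norm_num
  have h5 : (∫ t in x..h, |t - x| ^ 3) = (h - x) ^ 4 / 4 := by
    have hcong : (∫ t in x..h, |t - x| ^ 3) = ∫ t in x..h, (t - x) ^ 3 := by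
      apply intervalIntegral.integral_congr
      intro t ht
      rw [uIcc_of_le hxh] at ht
      show |t - x| ^ 3 = (t - x) ^ 3
      rw [abs_of_nonneg (by linarith [ht.1])]
    rw [hcong, intervalIntegral.integral_comp_sub_right (fun u : ℝ => u ^ 3) x, integral_pow]
    norm_num
  have h6 : (∫ t in (0:ℝ)..h, |t - x| ^ 3) = x ^ 4 / 4 + (h - x) ^ 4 / 4 := by
    rw [← intervalIntegral.integral_add_adjacent_intervals ia ib, h4, h5]
  have hirb : |Ir| ≤ M * (x ^ 4 + (h - x) ^ 4) / 24 := by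
    have hb1 : |Ir| ≤ ∫ t in (0:ℝ)..h, |r t| :=
      intervalIntegral.abs_integral_le_integral_abs hh.le
    have hb2 : (∫ t in (0:ℝ)..h, |r t|) ≤ ∫ t in (0:ℝ)..h, M * |t - x| ^ 3 / 6 :=
      intervalIntegral.integral_mono_on hh.le (hrc.abs.intervalIntegrable 0 h)
        ((by fun_prop : Continuous fun t : ℝ => M * |t - x| ^ 3 / 6).intervalIntegrable 0 h) hr
    have hb3 : (∫ t in (0:ℝ)..h, M * |t - x| ^ 3 / 6)
        = M / 6 * ∫ t in (0:ℝ)..h, |t - x| ^ 3 := by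
      rw [← intervalIntegral.integral_const_mul]
      apply intervalIntegral.integral_congr
      intro t _
      ring
    calc |Ir| ≤ ∫ t in (0:ℝ)..h, M * |t - x| ^ 3 / 6 := hb1.trans hb2
      _ = M / 6 * (x ^ 4 / 4 + (h - x) ^ 4 / 4) := by rw [hb3, h6]
      _ = M * (x ^ 4 + (h - x) ^ 4) / 24 := by ring
  -- conclude
  have hfin := bnd hx0 (by linarith : (0:ℝ) ≤ h - x) hM0 hr0 hrh hirb
  rw [show x + (h - x) = h by ring] at hfin
  have h3p : (0:ℝ) < h ^ 3 := pow_pos hh 3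
  rw [← mul_le_mul_iff_of_pos_right h3p]
  calc |g x - ghat g h x| * h ^ 3 = |(g x - ghat g h x) * h ^ 3| := by
        rw [abs_mul, abs_of_pos h3p]
    _ = |r 0 * (h - x) * h ^ 2 + r h * x * h ^ 2
          + 6 * (Ir - h * (r 0 + r h) / 2) * (x * (h - x))| := by rw [key, abs_neg]
    _ ≤ 1 / 12 * h ^ 3 * M * h ^ 3 := hfin
    _ = 1 / 12 * h ^ 3 * M * h ^ 3 := rfl
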